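/- The matrix Q g Q + (I − Q) is invertible with inverse (Q g Q + (I − Q))⁻¹ = N + (I − Q). -/
import Mathlib


open Matrix

/-- `Q g Q + (I − Q)` is invertible, with inverse `N + (I − Q)`. -/
theorem inv_QgQ_add_complement {n m : ℕ} (hm : 0 < m) (hmn : m < n)
    (J : Matrix (Fin m) (Fin n) ℝ) (hJ : J.rank = m)
    (g : Matrix (Fin n) (Fin n) ℝ) (hg : g.PosDef)
    (hJJ : IsUnit (J * Jᵀ).det) (hJgJ : IsUnit (J * g⁻¹ * Jᵀ).det)
    (Q N : Matrix (Fin n) (Fin n) ℝ)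
    (hQ : Q = 1 - Jᵀ * (J * Jᵀ)⁻¹ * J)
    (hN : N = g⁻¹ - g⁻¹ * Jᵀ * (J * g⁻¹ * Jᵀ)⁻¹ * J * g⁻¹) :
    IsUnit (Q * g * Q + (1 - Q)).det ∧
      (Q * g * Q + (1 - Q))⁻¹ = N + (1 - Q) := by
  -- basic inverse facts
  have hginv : g * g⁻¹ = 1 :=
    Matrix.mul_nonsing_inv g (isUnit_iff_ne_zero.mpr hg.det_pos.ne')
  have hK : J * g⁻¹ * Jᵀ * (J * g⁻¹ * Jᵀ)⁻¹ = 1 := Matrix.mul_nonsing_inv _ hJgJ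
  have hJJi : (J * Jᵀ)⁻¹ * (J * Jᵀ) = 1 := Matrix.nonsing_inv_mul _ hJJ
  -- J * N = 0
  have hJN : J * N = 0 := by
    rw [hN, Matrix.mul_sub]
    simp only [← Matrix.mul_assoc]
    rw [hK, Matrix.one_mul, sub_self]
  -- Q * Q = Q
  have hAA : (Jᵀ * (J * Jᵀ)⁻¹ * J) * (Jᵀ * (J * Jᵀ)⁻¹ * J) = Jᵀ * (J * Jᵀ)⁻¹ * J := by
    calc (Jᵀ * (J * Jᵀ)⁻¹ * J) * (Jᵀ * (J * Jᵀ)⁻¹ * J)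
        = Jᵀ * (((J * Jᵀ)⁻¹ * (J * Jᵀ)) * ((J * Jᵀ)⁻¹ * J)) := by
          simp only [Matrix.mul_assoc]
      _ = Jᵀ * (J * Jᵀ)⁻¹ * J := by rw [hJJi, Matrix.one_mul, Matrix.mul_assoc]
  have hQQ : Q * Q = Q := by
    rw [hQ, Matrix.sub_mul, Matrix.mul_sub, Matrix.mul_sub]
    simp only [Matrix.one_mul, Matrix.mul_one, hAA]
    abel
  -- Q * N = N  (since (1-Q) * N = 0)
  have h1QN : (1 - Q) * N = 0 := by
    have : Q * N = N := by
      rw [hQ, Matrix.sub_mul, Matrix.one_mul, Matrix.mul_assoc, hJN,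
        Matrix.mul_zero, sub_zero]
    rw [Matrix.sub_mul, Matrix.one_mul, this, sub_self]
  -- Q * (g * N) = Q
  have hgN : g * N = 1 - Jᵀ * (J * g⁻¹ * Jᵀ)⁻¹ * (J * g⁻¹) := by
    rw [hN, Matrix.mul_sub]
    simp only [← Matrix.mul_assoc]
    rw [hginv, Matrix.one_mul]
  have hQJt : Q * Jᵀ = 0 := by
    rw [hQ, Matrix.sub_mul, Matrix.one_mul]
    calc Jᵀ - Jᵀ * (J * Jᵀ)⁻¹ * J * Jᵀ
        = Jᵀ - Jᵀ * ((J * Jᵀ)⁻¹ * (J * Jᵀ)) := by simp only [Matrix.mul_assoc]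
      _ = 0 := by rw [hJJi, Matrix.mul_one, sub_self]
  have hQgN : Q * (g * N) = Q := by
    rw [hgN, Matrix.mul_sub, Matrix.mul_one]
    calc Q - Q * (Jᵀ * (J * g⁻¹ * Jᵀ)⁻¹ * (J * g⁻¹))
        = Q - Q * Jᵀ * ((J * g⁻¹ * Jᵀ)⁻¹ * (J * g⁻¹)) := by
          simp only [Matrix.mul_assoc]
      _ = Q := by rw [hQJt, Matrix.zero_mul, sub_zero]
  -- auxiliary projector identities
  have hQ1Q : Q * (1 - Q) = 0 := by
    rw [Matrix.mul_sub, Matrix.mul_one, hQQ, sub_self]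
  have h1Q1Q : (1 - Q) * (1 - Q) = 1 - Q := by
    rw [Matrix.sub_mul, Matrix.one_mul, Matrix.mul_sub, Matrix.mul_one, hQQ]
    abel
  -- the key right-inverse identity
  have key : (Q * g * Q + (1 - Q)) * (N + (1 - Q)) = 1 := by
    rw [Matrix.add_mul, Matrix.mul_add, Matrix.mul_add, h1QN, h1Q1Q]
    have h1 : Q * g * Q * N = Q := by
      rw [Matrix.mul_assoc (Q * g) Q N]
      have hQN : Q * N = N := by
        have := h1QN
        rw [Matrix.sub_mul, Matrix.one_mul, sub_eq_zero] at this
        exact this.symm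
      rw [hQN, Matrix.mul_assoc, hQgN]
    have h2 : Q * g * Q * (1 - Q) = 0 := by
      rw [Matrix.mul_assoc (Q * g) Q (1 - Q), hQ1Q, Matrix.mul_zero]
    rw [h1, h2]
    abel
  exact ⟨Matrix.isUnit_det_of_right_inverse key, Matrix.inv_eq_right_inv key⟩
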